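/- For 0 < v < w < u real numbers, (log(u+v) - log(u-v))/(log(u+w) - log(u-w)) < v/w. -/

import Mathlib

theorem stmt_14 (u v w : ℝ) (hv : 0 < v) (hvw : v < w) (hwu : w < u) :
    (Real.log (u + v) - Real.log (u - v)) / (Real.log (u + w) - Real.log (u - w))
      < v / w := by
  have hu : 0 < u := by linarith
  set f : ℝ → ℝ := fun t => (Real.log (u + t) - Real.log (u - t)) / t with hf
  have hD : ∀ t : ℝ, 0 < t → t < u →
      HasDerivAt f ((((u + t)⁻¹ + (u - t)⁻¹) * t -
        (Real.log (u + t) - Real.log (u - t)) * 1) / t ^ 2) t := by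
    intro t ht htu
    have h1 : HasDerivAt (fun s : ℝ => Real.log (u + s)) ((u + t)⁻¹) t := by
      have := (Real.hasDerivAt_log (x := u + t) (show (0:ℝ) < u + t by positivity).ne').comp t
        ((hasDerivAt_id t).const_add u)
      simpa [Function.comp_def] using this
    have h2 : HasDerivAt (fun s : ℝ => Real.log (u - s)) (-(u - t)⁻¹) t := by
      have := (Real.hasDerivAt_log (x := u - t) (show (0:ℝ) < u - t by linarith).ne').comp t
        ((hasDerivAt_id t).const_sub u)
      simpa [Function.comp_def] using this
    have h3 := (h1.sub h2).div (hasDerivAt_id t) ht.ne'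
    have e : f = ((fun s : ℝ => Real.log (u + s)) - fun s => Real.log (u - s)) / id := rfl
    rw [e]
    simpa [sub_neg_eq_add] using h3
  have hpos : ∀ t : ℝ, 0 < t → t < u →
      0 < (((u + t)⁻¹ + (u - t)⁻¹) * t -
        (Real.log (u + t) - Real.log (u - t)) * 1) / t ^ 2 := by
    intro t ht htu
    have h1 : (0:ℝ) < u - t := by linarith
    have h2 : (0:ℝ) < u + t := by linarith
    have hx1 : (1:ℝ) < (u + t) / (u - t) := by
      rw [lt_div_iff₀ h1]; linarith
    have hlx : 0 < Real.log ((u + t) / (u - t)) := Real.log_pos hx1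
    have hsinh : Real.sinh (Real.log ((u + t) / (u - t))) =
        ((u + t) / (u - t) - (u - t) / (u + t)) / 2 := by
      rw [Real.sinh_eq, Real.exp_log (by positivity), Real.exp_neg,
        Real.exp_log (by positivity)]
      rw [inv_div]
    have key : Real.log ((u + t) / (u - t)) < ((u + t)⁻¹ + (u - t)⁻¹) * t := by
      have := (Real.self_lt_sinh_iff).2 hlx
      rw [hsinh] at this
      have heq : ((u + t) / (u - t) - (u - t) / (u + t)) / 2
          = ((u + t)⁻¹ + (u - t)⁻¹) * t := by
        field_simp; ring
      linarith [heq ▸ this]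
    rw [Real.log_div h2.ne' h1.ne'] at key
    have : 0 < (((u + t)⁻¹ + (u - t)⁻¹) * t -
        (Real.log (u + t) - Real.log (u - t)) * 1) := by linarith
    positivity
  have hmono : StrictMonoOn f (Set.Icc v w) := by
    apply strictMonoOn_of_deriv_pos (convex_Icc v w)
    · intro t ht
      exact (hD t (lt_of_lt_of_le hv ht.1) (lt_of_le_of_lt ht.2 hwu)).continuousAt.continuousWithinAt
    · intro t ht
      rw [interior_Icc] at ht
      have h1 : 0 < t := lt_trans hv ht.1
      have h2 : t < u := lt_trans ht.2 hwu
      rw [(hD t h1 h2).deriv]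
      exact hpos t h1 h2
  have hfvw : f v < f w := hmono (Set.left_mem_Icc.2 hvw.le) (Set.right_mem_Icc.2 hvw.le) hvw
  have hw : 0 < w := lt_trans hv hvw
  have hgw : 0 < Real.log (u + w) - Real.log (u - w) := by
    have := Real.log_lt_log (by linarith : (0:ℝ) < u - w) (by linarith : u - w < u + w)
    linarith
  simp only [hf] at hfvw
  rw [div_lt_div_iff₀ hv hw] at hfvw
  rw [div_lt_div_iff₀ hgw hw]
  nlinarith
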